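/- Let ℓ ≥ 1, λ₁ > 0, λ₂ > 0, let H_X and H_Y be real Hilbert spaces, let ŵ_μ, ψ₁, …, ψ_ℓ ∈ H_X, let ŵ_ν, χ₁, …, χ_ℓ ∈ H_Y, let c₁, …, c_ℓ ∈ ℝ, and let Φ₁, …, Φ_ℓ ∈ ℝ^ℓ. Define Q ∈ ℝ^{ℓ×ℓ} by Q_{ij} = ⟨ψ_i, ψ_j⟩ + ⟨χ_i, χ_j⟩, z_j = ⟨ŵ_μ, ψ_j⟩ + ⟨ŵ_ν, χ_j⟩ − 2λ₂ c_j, and q² = ‖ŵ_μ‖² + ‖ŵ_ν‖². Assume there exists at least one primal-feasible triple (u, v, B), i.e., u ∈ H_X, v ∈ H_Y, B a positive semidefinite ℓ×ℓ matrix with c_j − ⟨u, ψ_j⟩ − ⟨v, χ_j⟩ = Φ_jᵀ B Φ_j for all j ∈ [ℓ]. Then the supremum of ⟨u, ŵ_μ⟩ + ⟨v, ŵ_ν⟩ − λ₁ tr(B) − λ₂(‖u‖² + ‖v‖²) over primal-feasible triples equals the infimum of (1/(4λ₂)) γᵀ Q γ − (1/(2λ₂)) Σ_{j=1}^ℓ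 γ_j z_j + q²/(4λ₂) over all γ ∈ ℝ^ℓ satisfying Σ_{j=1}^ℓ γ_j Φ_j Φ_jᵀ + λ₁·Id ⪰ 0. -/

import Mathlib

open scoped InnerProductSpace
open Matrix

section helpers
set_option linter.unusedSectionVars false
variable {n α : Type*} [Fintype n] [Fintype α] [DecidableEq n]

lemma real_psd_quad {B : Matrix n n ℝ} (hB : B.PosSemidef) (x : n → ℝ) :
    0 ≤ x ⬝ᵥ B *ᵥ x := by simpa using hB.dotProduct_mulVec_nonneg x

lemma real_psd_of {B : Matrix n n ℝ} (h1 : B.IsHermitian) (h2 : ∀ x, 0 ≤ x ⬝ᵥ B *ᵥ x) :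
    B.PosSemidef := .of_dotProduct_mulVec_nonneg h1 fun x => by simpa using h2 x

lemma psd_diag_nonneg {B : Matrix n n ℝ} (hB : B.PosSemidef) (i : n) : 0 ≤ B i i := by
  simpa [dotProduct_single, mulVec_single] using real_psd_quad hB (Pi.single i 1)

lemma psd_trace_nonneg {B : Matrix n n ℝ} (hB : B.PosSemidef) : 0 ≤ B.trace :=
  Finset.sum_nonneg fun i _ => psd_diag_nonneg hB i

lemma herm_smul {B : Matrix n n ℝ} (s : ℝ) (hB : B.IsHermitian) : (s • B).IsHermitian := by
  show (s • B)ᴴ = s • B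
  rw [conjTranspose_smul, star_trivial, hB.eq]

lemma vecMulVec_herm (x : n → ℝ) : (vecMulVec x x).IsHermitian := by
  ext i j; simp [vecMulVec_apply, mul_comm]

lemma mulVec_sum' (s : Finset α) (f : α → Matrix n n ℝ) (x : n → ℝ) :
    (∑ j ∈ s, f j) *ᵥ x = ∑ j ∈ s, f j *ᵥ x := by
  ext i
  simp only [mulVec, dotProduct, Matrix.sum_apply, Finset.sum_apply, Finset.sum_mul]
  exact Finset.sum_comm

lemma dotProduct_sum' (s : Finset α) (x : n → ℝ) (w : α → n → ℝ) :
    x ⬝ᵥ (∑ j ∈ s, w j) = ∑ j ∈ s, x ⬝ᵥ w j := by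
  simp only [dotProduct, Finset.sum_apply, Finset.mul_sum]
  exact Finset.sum_comm

lemma dot_vecMulVec (x a b y : n → ℝ) :
    x ⬝ᵥ (vecMulVec a b *ᵥ y) = (x ⬝ᵥ a) * (b ⬝ᵥ y) := by
  simp only [dotProduct, mulVec, vecMulVec_apply, dotProduct]
  rw [Finset.sum_mul]
  refine Finset.sum_congr rfl fun i _ => ?_
  rw [Finset.mul_sum, Finset.mul_sum]
  refine Finset.sum_congr rfl fun k _ => by ring

lemma vecMulVec_psd (x : n → ℝ) : (vecMulVec x x).PosSemidef :=
  real_psd_of (vecMulVec_herm x) fun y => by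
    rw [dot_vecMulVec, dotProduct_comm]; exact mul_self_nonneg _

lemma psd_smul_nonneg {B : Matrix n n ℝ} {s : ℝ} (hs : 0 ≤ s) (hB : B.PosSemidef) :
    (s • B).PosSemidef :=
  real_psd_of (herm_smul s hB.1) fun y => by
    rw [smul_mulVec, dotProduct_smul, smul_eq_mul]
    exact mul_nonneg hs (real_psd_quad hB y)

lemma trace_mul_vecMulVec (B : Matrix n n ℝ) (x : n → ℝ) :
    (B * vecMulVec x x).trace = x ⬝ᵥ B *ᵥ x := by
  simp only [Matrix.trace, Matrix.diag, Matrix.mul_apply, vecMulVec_apply, dotProduct, mulVec]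
  refine Finset.sum_congr rfl fun i _ => ?_
  rw [Finset.mul_sum]
  refine Finset.sum_congr rfl fun k _ => by ring

lemma trace_mul_psd_nonneg {A B : Matrix n n ℝ} (hA : A.PosSemidef) (hB : B.PosSemidef) :
    0 ≤ (A * B).trace := by
  open scoped MatrixOrder in
  obtain ⟨C, rfl⟩ := CStarAlgebra.nonneg_iff_eq_star_mul_self.mp hA.nonneg
  calc (0:ℝ) ≤ (C * B * Cᴴ).trace := psd_trace_nonneg (hB.mul_mul_conjTranspose_same C)
    _ = (Cᴴ * (C * B)).trace := by rw [trace_mul_comm (C * B) Cᴴ]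
    _ = (Cᴴ * C * B).trace := by rw [Matrix.mul_assoc]

lemma nonpos_of_forall_smul_lt {A K : ℝ} (h : ∀ s : ℝ, 0 < s → s * A < K) : A ≤ 0 := by
  by_contra h'
  push_neg at h'
  have hs : 0 < (|K| + 1) / A := div_pos (by positivity) h'
  have h2 := h _ hs
  rw [div_mul_cancel₀ _ (ne_of_gt h')] at h2
  have := le_abs_self K
  linarith

lemma herm_sum_vv (γ : n → ℝ) (Φ : n → n → ℝ) :
    (∑ j, γ j • vecMulVec (Φ j) (Φ j)).IsHermitian := by
  show _ᴴ = _
  rw [conjTranspose_sum]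
  exact Finset.sum_congr rfl fun j _ => (herm_smul (γ j) (vecMulVec_herm (Φ j))).eq

lemma Mgamma_herm (γ : n → ℝ) (Φ : n → n → ℝ) (lam1 : ℝ) :
    (∑ j, γ j • vecMulVec (Φ j) (Φ j) + lam1 • (1 : Matrix n n ℝ)).IsHermitian :=
  (herm_sum_vv γ Φ).add (herm_smul lam1 isHermitian_one)

lemma quad_eval0 (γ : n → ℝ) (Φ : n → n → ℝ) (x : n → ℝ) :
    x ⬝ᵥ ((∑ j, γ j • vecMulVec (Φ j) (Φ j)) *ᵥ x) =
      ∑ j, γ j * ((Φ j ⬝ᵥ x) * (Φ j ⬝ᵥ x)) := by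
  rw [mulVec_sum', dotProduct_sum']
  refine Finset.sum_congr rfl fun j _ => ?_
  rw [smul_mulVec, dotProduct_smul, dot_vecMulVec, smul_eq_mul, dotProduct_comm x (Φ j)]

lemma quad_eval (lam1 : ℝ) (γ : n → ℝ) (Φ : n → n → ℝ) (x : n → ℝ) :
    x ⬝ᵥ ((∑ j, γ j • vecMulVec (Φ j) (Φ j) + lam1 • (1 : Matrix n n ℝ)) *ᵥ x) =
      ∑ j, γ j * ((Φ j ⬝ᵥ x) * (Φ j ⬝ᵥ x)) + lam1 * (x ⬝ᵥ x) := by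
  rw [add_mulVec, dotProduct_add, quad_eval0, smul_mulVec, dotProduct_smul, one_mulVec,
    smul_eq_mul]

lemma trace_mul_sum_vv (B : Matrix n n ℝ) (γ : n → ℝ) (Φ : n → n → ℝ) :
    (B * ∑ j, γ j • vecMulVec (Φ j) (Φ j)).trace = ∑ j, γ j * (Φ j ⬝ᵥ B *ᵥ Φ j) := by
  rw [Matrix.mul_sum, trace_sum]
  refine Finset.sum_congr rfl fun j _ => ?_
  rw [mul_smul_comm, trace_smul, smul_eq_mul, trace_mul_vecMulVec]

lemma trace_mul_Mgamma (B : Matrix n n ℝ) (γ : n → ℝ) (Φ : n → n → ℝ) (lam1 : ℝ) :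
    (B * (∑ j, γ j • vecMulVec (Φ j) (Φ j) + lam1 • (1 : Matrix n n ℝ))).trace
      = ∑ j, γ j * (Φ j ⬝ᵥ B *ᵥ Φ j) + lam1 * B.trace := by
  rw [Matrix.mul_add, trace_add, trace_mul_sum_vv, mul_smul_comm, mul_one, trace_smul,
    smul_eq_mul]

lemma psd_entry_le_trace {B : Matrix n n ℝ} (hB : B.PosSemidef) (i j : n) :
    |B i j| ≤ B.trace := by
  rcases eq_or_ne i j with rfl | hij
  · rw [abs_of_nonneg (psd_diag_nonneg hB i)]
    exact Finset.single_le_sum (fun k _ => psd_diag_nonneg hB k) (Finset.mem_univ i)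
  · have hji : B j i = B i j := by
      have := congrFun (congrFun hB.1.eq j) i
      simpa [Matrix.conjTranspose_apply] using this.symm
    have h1 := real_psd_quad hB (Pi.single i 1 + Pi.single j 1)
    have h2 := real_psd_quad hB (Pi.single i 1 - Pi.single j 1)
    rw [mulVec_add, add_dotProduct, dotProduct_add, dotProduct_add] at h1
    rw [mulVec_sub, sub_dotProduct, dotProduct_sub, dotProduct_sub] at h2
    simp only [mulVec_single, single_dotProduct, one_mul, mul_one, MulOpposite.op_one, one_smul,
        col_apply] at h1 h2
    have hii := psd_diag_nonneg hB i
    have hjj := psd_diag_nonneg hB j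
    have hsum : B i i + B j j ≤ B.trace := by
      have : ({i, j} : Finset n) ⊆ Finset.univ := Finset.subset_univ _
      have hs := Finset.sum_le_sum_of_subset_of_nonneg this
        (fun k _ _ => psd_diag_nonneg hB k)
      rwa [Finset.sum_pair hij] at hs
    rw [abs_le]
    constructor <;> nlinarith
end helpers

section ips
variable {E : Type*} [NormedAddCommGroup E] [InnerProductSpace ℝ E]

lemma inner_sum_smul' {l : ℕ} (u : E) (γ : Fin l → ℝ) (ψ : Fin l → E) :
    ⟪u, ∑ j, γ j • ψ j⟫_ℝ = ∑ j, γ j * ⟪u, ψ j⟫_ℝ := by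
  rw [inner_sum]
  exact Finset.sum_congr rfl fun j _ => real_inner_smul_right _ _ _

lemma normsq_sum_smul {l : ℕ} (γ : Fin l → ℝ) (ψ : Fin l → E) :
    ‖∑ j, γ j • ψ j‖ ^ 2 = ∑ i, γ i * ∑ j, γ j * ⟪ψ i, ψ j⟫_ℝ := by
  rw [← real_inner_self_eq_norm_sq, sum_inner]
  refine Finset.sum_congr rfl fun i _ => ?_
  rw [real_inner_smul_left, inner_sum_smul']

lemma normsq_convex (a b : ℝ) (ha : 0 ≤ a) (hb : 0 ≤ b) (hab : a + b = 1) (x y : E) :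
    ‖a • x + b • y‖ ^ 2 ≤ a * ‖x‖ ^ 2 + b * ‖y‖ ^ 2 := by
  have h1 : ‖a • x + b • y‖ ^ 2 = a ^ 2 * ‖x‖ ^ 2 + 2 * (a * b * ⟪x, y⟫_ℝ) + b ^ 2 * ‖y‖ ^ 2 := by
    rw [norm_add_sq_real, real_inner_smul_left, real_inner_smul_right, norm_smul, norm_smul]
    simp only [Real.norm_eq_abs, mul_pow, sq_abs]
    ring
  rw [h1]
  nlinarith [real_inner_le_norm x y, sq_nonneg (‖x‖ - ‖y‖), mul_nonneg ha hb,
    norm_nonneg x, norm_nonneg y]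
end ips

lemma key_identity (l : ℕ) (lam2 : ℝ) (hlam2 : 0 < lam2)
    {HX HY : Type*}
    [NormedAddCommGroup HX] [InnerProductSpace ℝ HX]
    [NormedAddCommGroup HY] [InnerProductSpace ℝ HY]
    (wmu : HX) (psi : Fin l → HX) (wnu : HY) (chi : Fin l → HY)
    (c : Fin l → ℝ)
    (Q : Matrix (Fin l) (Fin l) ℝ)
    (hQ : Q = Matrix.of fun i j => ⟪psi i, psi j⟫_ℝ + ⟪chi i, chi j⟫_ℝ)
    (z : Fin l → ℝ)
    (hz : ∀ j, z j = ⟪wmu, psi j⟫_ℝ + ⟪wnu, chi j⟫_ℝ - 2 * lam2 * c j)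
    (q2 : ℝ) (hq2 : q2 = ‖wmu‖ ^ 2 + ‖wnu‖ ^ 2)
    (γ : Fin l → ℝ) (u : HX) (v : HY) :
    ⟪u, wmu⟫_ℝ + ⟪v, wnu⟫_ℝ - lam2 * (‖u‖ ^ 2 + ‖v‖ ^ 2)
      + ∑ j, γ j * (c j - ⟪u, psi j⟫_ℝ - ⟪v, chi j⟫_ℝ)
    = ((1 / (4 * lam2)) * (γ ⬝ᵥ Q *ᵥ γ) - (1 / (2 * lam2)) * ∑ j, γ j * z j + q2 / (4 * lam2))
      - lam2 * ‖u - (1 / (2 * lam2)) • (wmu - ∑ j, γ j • psi j)‖ ^ 2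
      - lam2 * ‖v - (1 / (2 * lam2)) • (wnu - ∑ j, γ j • chi j)‖ ^ 2 := by
  have hu : ⟪u, wmu - ∑ j, γ j • psi j⟫_ℝ - lam2 * ‖u‖ ^ 2 =
      ‖wmu - ∑ j, γ j • psi j‖ ^ 2 / (4 * lam2)
        - lam2 * ‖u - (1 / (2 * lam2)) • (wmu - ∑ j, γ j • psi j)‖ ^ 2 := by
    have h1 : ‖u - (1 / (2 * lam2)) • (wmu - ∑ j, γ j • psi j)‖ ^ 2
        = ‖u‖ ^ 2 - 2 * ((1 / (2 * lam2)) * ⟪u, wmu - ∑ j, γ j • psi j⟫_ℝ)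
          + (1 / (2 * lam2)) ^ 2 * ‖wmu - ∑ j, γ j • psi j‖ ^ 2 := by
      rw [norm_sub_sq_real, real_inner_smul_right, norm_smul]
      simp only [Real.norm_eq_abs, mul_pow, sq_abs]
    rw [h1]; field_simp; ring
  have hv : ⟪v, wnu - ∑ j, γ j • chi j⟫_ℝ - lam2 * ‖v‖ ^ 2 =
      ‖wnu - ∑ j, γ j • chi j‖ ^ 2 / (4 * lam2)
        - lam2 * ‖v - (1 / (2 * lam2)) • (wnu - ∑ j, γ j • chi j)‖ ^ 2 := by
    have h1 : ‖v - (1 / (2 * lam2)) • (wnu - ∑ j, γ j • chi j)‖ ^ 2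
        = ‖v‖ ^ 2 - 2 * ((1 / (2 * lam2)) * ⟪v, wnu - ∑ j, γ j • chi j⟫_ℝ)
          + (1 / (2 * lam2)) ^ 2 * ‖wnu - ∑ j, γ j • chi j‖ ^ 2 := by
      rw [norm_sub_sq_real, real_inner_smul_right, norm_smul]
      simp only [Real.norm_eq_abs, mul_pow, sq_abs]
    rw [h1]; field_simp; ring
  have ea : ‖wmu - ∑ j, γ j • psi j‖ ^ 2
      = ‖wmu‖ ^ 2 - 2 * ∑ j, γ j * ⟪wmu, psi j⟫_ℝ
        + ∑ i, γ i * ∑ j, γ j * ⟪psi i, psi j⟫_ℝ := by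
    rw [norm_sub_sq_real, inner_sum_smul', normsq_sum_smul]
  have eb : ‖wnu - ∑ j, γ j • chi j‖ ^ 2
      = ‖wnu‖ ^ 2 - 2 * ∑ j, γ j * ⟪wnu, chi j⟫_ℝ
        + ∑ i, γ i * ∑ j, γ j * ⟪chi i, chi j⟫_ℝ := by
    rw [norm_sub_sq_real, inner_sum_smul', normsq_sum_smul]
  have eQ : γ ⬝ᵥ Q *ᵥ γ = ∑ i, γ i * ∑ j, γ j * ⟪psi i, psi j⟫_ℝ
      + ∑ i, γ i * ∑ j, γ j * ⟪chi i, chi j⟫_ℝ := by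
    subst hQ
    rw [← Finset.sum_add_distrib]
    simp only [dotProduct, mulVec, Matrix.of_apply, dotProduct]
    refine Finset.sum_congr rfl fun i _ => ?_
    rw [← mul_add, ← Finset.sum_add_distrib]
    rw [Finset.mul_sum, Finset.mul_sum]
    refine Finset.sum_congr rfl fun j _ => by ring
  have ez : ∑ j, γ j * z j = ∑ j, γ j * ⟪wmu, psi j⟫_ℝ + ∑ j, γ j * ⟪wnu, chi j⟫_ℝ
      - 2 * lam2 * ∑ j, γ j * c j := by
    simp only [hz]
    rw [Finset.mul_sum, ← Finset.sum_add_distrib, ← Finset.sum_sub_distrib]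
    refine Finset.sum_congr rfl fun j _ => by ring
  have elhs : ∑ j, γ j * (c j - ⟪u, psi j⟫_ℝ - ⟪v, chi j⟫_ℝ)
      = ∑ j, γ j * c j - ⟪u, ∑ j, γ j • psi j⟫_ℝ - ⟪v, ∑ j, γ j • chi j⟫_ℝ := by
    rw [inner_sum_smul', inner_sum_smul', ← Finset.sum_sub_distrib, ← Finset.sum_sub_distrib]
    refine Finset.sum_congr rfl fun j _ => by ring
  have hiu : ⟪u, wmu - ∑ j, γ j • psi j⟫_ℝ = ⟪u, wmu⟫_ℝ - ⟪u, ∑ j, γ j • psi j⟫_ℝ :=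
    inner_sub_right _ _ _
  have hiv : ⟪v, wnu - ∑ j, γ j • chi j⟫_ℝ = ⟪v, wnu⟫_ℝ - ⟪v, ∑ j, γ j • chi j⟫_ℝ :=
    inner_sub_right _ _ _
  rw [elhs]
  have goal2 : ⟪u, wmu - ∑ j, γ j • psi j⟫_ℝ - lam2 * ‖u‖ ^ 2
      + (⟪v, wnu - ∑ j, γ j • chi j⟫_ℝ - lam2 * ‖v‖ ^ 2) + ∑ j, γ j * c j
      = ((1 / (4 * lam2)) * (γ ⬝ᵥ Q *ᵥ γ) - (1 / (2 * lam2)) * ∑ j, γ j * z j + q2 / (4 * lam2))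
      - lam2 * ‖u - (1 / (2 * lam2)) • (wmu - ∑ j, γ j • psi j)‖ ^ 2
      - lam2 * ‖v - (1 / (2 * lam2)) • (wnu - ∑ j, γ j • chi j)‖ ^ 2 := by
    rw [hu, hv, ea, eb, eQ, ez, hq2]
    field_simp
    ring
  rw [hiu, hiv] at goal2
  linarith [goal2]


lemma isClosed_of_compact_inter_ball {E : Type*} [NormedAddCommGroup E] {W : Set E}
    (h : ∀ ρ : ℝ, 0 < ρ → IsCompact (W ∩ Metric.closedBall 0 ρ)) : IsClosed W := by
  rw [← closure_subset_iff_isClosed]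
  intro x hx
  have hρ : (0:ℝ) < ‖x‖ + 1 := by positivity
  have hx2 : x ∈ closure (W ∩ Metric.closedBall 0 (‖x‖ + 1)) := by
    rw [_root_.mem_closure_iff] at hx ⊢
    intro o ho hxo
    obtain ⟨y, hy1, hy2⟩ := hx (o ∩ Metric.ball x 1) (ho.inter Metric.isOpen_ball)
      ⟨hxo, Metric.mem_ball_self one_pos⟩
    refine ⟨y, hy1.1, hy2, ?_⟩
    rw [mem_closedBall_zero_iff]
    have : dist y x < 1 := hy1.2
    calc ‖y‖ ≤ ‖x‖ + dist y x := by rw [dist_eq_norm]; exact norm_le_insert' _ _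
      _ ≤ ‖x‖ + 1 := by linarith
  have := (h _ hρ).isClosed.closure_subset hx2
  exact this.1

lemma isClosed_psd (l : ℕ) :
    IsClosed {B : Fin l → Fin l → ℝ | (Matrix.of B).PosSemidef} := by
  have : {B : Fin l → Fin l → ℝ | (Matrix.of B).PosSemidef}
      = (⋂ (i : Fin l) (j : Fin l), {B | B j i = B i j}) ∩
        ⋂ (x : Fin l → ℝ), {B | 0 ≤ x ⬝ᵥ (Matrix.of B) *ᵥ x} := by
    ext B
    constructor
    · rintro ⟨h1, h2⟩
      refine ⟨Set.mem_iInter₂.mpr fun i j => ?_, Set.mem_iInter.mpr fun x => ?_⟩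
      · have := congrFun (congrFun h1.eq i) j
        simpa [Matrix.conjTranspose_apply] using this
      · simpa using Matrix.PosSemidef.dotProduct_mulVec_nonneg ⟨h1, h2⟩ x
    · rintro ⟨h1, h2⟩
      have h1' := Set.mem_iInter₂.mp h1
      refine real_psd_of ?_ fun x => by simpa using Set.mem_iInter.mp h2 x
      ext i j
      simpa [Matrix.conjTranspose_apply] using h1' i j
  rw [this]
  refine IsClosed.inter (isClosed_iInter fun i => isClosed_iInter fun j => ?_)
    (isClosed_iInter fun x => ?_)
  · have c1 : Continuous fun B : Fin l → Fin l → ℝ => B j i :=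
      (continuous_apply i).comp (continuous_apply j)
    have c2 : Continuous fun B : Fin l → Fin l → ℝ => B i j :=
      (continuous_apply j).comp (continuous_apply i)
    exact isClosed_eq c1 c2
  · have c3 : Continuous fun B : Fin l → Fin l → ℝ => x ⬝ᵥ (Matrix.of B) *ᵥ x := by
      unfold dotProduct Matrix.mulVec dotProduct
      refine continuous_finset_sum _ fun i _ => Continuous.mul continuous_const ?_
      refine continuous_finset_sum _ fun k _ => Continuous.mul ?_ continuous_const
      exact (continuous_apply k).comp (continuous_apply i)
    exact isClosed_le continuous_const c3

lemma psd_one {n : Type*} [Fintype n] [DecidableEq n] : (1 : Matrix n n ℝ).PosSemidef :=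
  real_psd_of isHermitian_one fun x => by
    rw [one_mulVec]
    exact Finset.sum_nonneg fun i _ => mul_self_nonneg _

set_option maxHeartbeats 2000000 in
/-- Strong duality between the finite-dimensional regularized
sum-of-squares problem and its dual semidefinite program, Theorem 8 of the paper. -/
theorem strong_duality_sos_ot
    (l : ℕ) (hl : 1 ≤ l) (lam1 lam2 : ℝ) (hlam1 : 0 < lam1) (hlam2 : 0 < lam2)
    {HX HY : Type*}
    [NormedAddCommGroup HX] [InnerProductSpace ℝ HX] [CompleteSpace HX]
    [NormedAddCommGroup HY] [InnerProductSpace ℝ HY] [CompleteSpace HY]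
    (wmu : HX) (psi : Fin l → HX) (wnu : HY) (chi : Fin l → HY)
    (c : Fin l → ℝ) (Phi : Fin l → Fin l → ℝ)
    (Q : Matrix (Fin l) (Fin l) ℝ)
    (hQ : Q = Matrix.of fun i j => ⟪psi i, psi j⟫_ℝ + ⟪chi i, chi j⟫_ℝ)
    (z : Fin l → ℝ)
    (hz : ∀ j, z j = ⟪wmu, psi j⟫_ℝ + ⟪wnu, chi j⟫_ℝ - 2 * lam2 * c j)
    (q2 : ℝ) (hq2 : q2 = ‖wmu‖ ^ 2 + ‖wnu‖ ^ 2)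
    (hfeasible : ∃ (u : HX) (v : HY) (B : Matrix (Fin l) (Fin l) ℝ),
      B.PosSemidef ∧ ∀ j, c j - ⟪u, psi j⟫_ℝ - ⟪v, chi j⟫_ℝ =
        dotProduct (Phi j) (B.mulVec (Phi j))) :
    sSup {r : ℝ | ∃ (u : HX) (v : HY) (B : Matrix (Fin l) (Fin l) ℝ),
        B.PosSemidef ∧
        (∀ j, c j - ⟪u, psi j⟫_ℝ - ⟪v, chi j⟫_ℝ =
          dotProduct (Phi j) (B.mulVec (Phi j))) ∧
        r = ⟪u, wmu⟫_ℝ + ⟪v, wnu⟫_ℝ - lam1 * B.trace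
          - lam2 * (‖u‖ ^ 2 + ‖v‖ ^ 2)} =
    sInf {r : ℝ | ∃ γ : Fin l → ℝ,
        (∑ j, γ j • Matrix.vecMulVec (Phi j) (Phi j) +
          lam1 • (1 : Matrix (Fin l) (Fin l) ℝ)).PosSemidef ∧
        r = (1 / (4 * lam2)) * dotProduct γ (Q.mulVec γ)
          - (1 / (2 * lam2)) * ∑ j, γ j * z j + q2 / (4 * lam2)} := by
  classical
  set Pset : Set ℝ := {r : ℝ | ∃ (u : HX) (v : HY) (B : Matrix (Fin l) (Fin l) ℝ),
        B.PosSemidef ∧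
        (∀ j, c j - ⟪u, psi j⟫_ℝ - ⟪v, chi j⟫_ℝ =
          dotProduct (Phi j) (B.mulVec (Phi j))) ∧
        r = ⟪u, wmu⟫_ℝ + ⟪v, wnu⟫_ℝ - lam1 * B.trace
          - lam2 * (‖u‖ ^ 2 + ‖v‖ ^ 2)} with hPdef
  set Dset : Set ℝ := {r : ℝ | ∃ γ : Fin l → ℝ,
        (∑ j, γ j • Matrix.vecMulVec (Phi j) (Phi j) +
          lam1 • (1 : Matrix (Fin l) (Fin l) ℝ)).PosSemidef ∧
        r = (1 / (4 * lam2)) * dotProduct γ (Q.mulVec γ)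
          - (1 / (2 * lam2)) * ∑ j, γ j * z j + q2 / (4 * lam2)} with hDdef
  have hM0 : (∑ j : Fin l, (0:ℝ) • Matrix.vecMulVec (Phi j) (Phi j) +
      lam1 • (1 : Matrix (Fin l) (Fin l) ℝ)).PosSemidef := by
    simp only [zero_smul, Finset.sum_const_zero, zero_add]
    exact psd_smul_nonneg hlam1.le psd_one
  have hDne : Dset.Nonempty := ⟨_, 0, hM0, rfl⟩
  obtain ⟨u0, v0, B0, hB0, hfeas0⟩ := hfeasible
  have hPne : Pset.Nonempty := ⟨_, u0, v0, B0, hB0, hfeas0, rfl⟩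
  have hweak : ∀ r ∈ Pset, ∀ d ∈ Dset, r ≤ d := by
    rintro r ⟨u, v, B, hB, hfeas, rfl⟩ d ⟨γ, hM, rfl⟩
    have key := key_identity l lam2 hlam2 wmu psi wnu chi c Q hQ z hz q2 hq2 γ u v
    have hS : ∑ j, γ j * (c j - ⟪u, psi j⟫_ℝ - ⟪v, chi j⟫_ℝ)
        = ∑ j, γ j * (Phi j ⬝ᵥ B *ᵥ Phi j) :=
      Finset.sum_congr rfl fun j _ => by rw [hfeas j]
    have htr := trace_mul_Mgamma B γ Phi lam1
    have hpos := trace_mul_psd_nonneg hB hM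
    have hn1 : 0 ≤ lam2 * ‖u - (1 / (2 * lam2)) • (wmu - ∑ j, γ j • psi j)‖ ^ 2 := by positivity
    have hn2 : 0 ≤ lam2 * ‖v - (1 / (2 * lam2)) • (wnu - ∑ j, γ j • chi j)‖ ^ 2 := by positivity
    linarith [key, hS, htr, hpos, hn1, hn2]
  have hbddP : BddAbove Pset := ⟨_, fun p hp => hweak p hp _ ⟨0, hM0, rfl⟩⟩
  obtain ⟨p0, hp0⟩ := hPne
  have hbddD : BddBelow Dset := ⟨p0, fun d hd => hweak p0 hp0 d hd⟩
  have h1 : sSup Pset ≤ sInf Dset :=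
    csSup_le ⟨p0, hp0⟩ fun p hp => le_csInf hDne fun d hd => hweak p hp d hd
  refine le_antisymm h1 ?_
  by_contra hlt
  push_neg at hlt
  set t : ℝ := (sSup Pset + sInf Dset) / 2 with ht
  have htS : sSup Pset < t := by simp only [ht]; linarith
  have htD : t < sInf Dset := by simp only [ht]; linarith
  -- finite dimensional subspaces
  set VX : Submodule ℝ HX := Submodule.span ℝ (insert wmu (Set.range psi)) with hVXdef
  set VY : Submodule ℝ HY := Submodule.span ℝ (insert wnu (Set.range chi)) with hVYdef
  haveI : FiniteDimensional ℝ VX :=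
    FiniteDimensional.span_of_finite ℝ ((Set.finite_range psi).insert wmu)
  haveI : FiniteDimensional ℝ VY :=
    FiniteDimensional.span_of_finite ℝ ((Set.finite_range chi).insert wnu)
  have hwmuX : wmu ∈ VX := Submodule.subset_span (Set.mem_insert _ _)
  have hwnuY : wnu ∈ VY := Submodule.subset_span (Set.mem_insert _ _)
  have hpsiX : ∀ j, psi j ∈ VX := fun j =>
    Submodule.subset_span (Set.mem_insert_of_mem _ ⟨j, rfl⟩)
  have hchiY : ∀ j, chi j ∈ VY := fun j =>
    Submodule.subset_span (Set.mem_insert_of_mem _ ⟨j, rfl⟩)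
  -- the convex set W
  set W : Set ((Fin l → ℝ) × ℝ) := {p | ∃ u : VX, ∃ v : VY, ∃ B : Fin l → Fin l → ℝ,
    (Matrix.of B).PosSemidef ∧
    (∀ j, p.1 j = ⟪(u : HX), psi j⟫_ℝ + ⟪(v : HY), chi j⟫_ℝ
        + Phi j ⬝ᵥ (Matrix.of B) *ᵥ Phi j) ∧
    p.2 ≤ ⟪(u : HX), wmu⟫_ℝ + ⟪(v : HY), wnu⟫_ℝ - lam1 * (Matrix.of B).trace
      - lam2 * (‖(u : HX)‖ ^ 2 + ‖(v : HY)‖ ^ 2)} with hWdef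
  have hnotin : ((c, t) : (Fin l → ℝ) × ℝ) ∉ W := by
    rintro ⟨u, v, B, hB, hcs, hrt⟩
    have hmem : (⟪(u:HX), wmu⟫_ℝ + ⟪(v:HY), wnu⟫_ℝ - lam1 * (Matrix.of B).trace
        - lam2 * (‖(u:HX)‖ ^ 2 + ‖(v:HY)‖ ^ 2)) ∈ Pset := by
      refine ⟨u, v, Matrix.of B, hB, fun j => ?_, rfl⟩
      have := hcs j
      simp only at this
      linarith
    have := le_csSup hbddP hmem
    simp only at hrt
    linarith
  have hWconv : Convex ℝ W := by
    rintro p ⟨u1, v1, B1, hB1, hc1, hr1⟩ q ⟨u2, v2, B2, hB2, hc2, hr2⟩ a b ha hb hab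
    refine ⟨a • u1 + b • u2, a • v1 + b • v2, a • B1 + b • B2,
      (psd_smul_nonneg ha hB1).add (psd_smul_nonneg hb hB2), fun j => ?_, ?_⟩
    · have h1 := hc1 j
      have h2 := hc2 j
      show a * p.1 j + b * q.1 j = _
      rw [h1, h2]
      simp only [Submodule.coe_add, Submodule.coe_smul, inner_add_left, real_inner_smul_left]
      have hBpart : Phi j ⬝ᵥ (Matrix.of (a • B1 + b • B2)) *ᵥ Phi j
          = a * (Phi j ⬝ᵥ (Matrix.of B1) *ᵥ Phi j) + b * (Phi j ⬝ᵥ (Matrix.of B2) *ᵥ Phi j) := by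
        have : (Matrix.of (a • B1 + b • B2)) = a • Matrix.of B1 + b • Matrix.of B2 := rfl
        rw [this, add_mulVec, smul_mulVec, smul_mulVec, dotProduct_add,
          dotProduct_smul, dotProduct_smul, smul_eq_mul, smul_eq_mul]
      rw [hBpart]
      ring
    · show a * p.2 + b * q.2 ≤ _
      have e1 := normsq_convex a b ha hb hab ((u1 : HX)) ((u2 : HX))
      have e2 := normsq_convex a b ha hb hab ((v1 : HY)) ((v2 : HY))
      have htrace : (Matrix.of (a • B1 + b • B2)).trace
          = a * (Matrix.of B1).trace + b * (Matrix.of B2).trace := by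
        have : (Matrix.of (a • B1 + b • B2)) = a • Matrix.of B1 + b • Matrix.of B2 := rfl
        rw [this, trace_add, trace_smul, trace_smul, smul_eq_mul, smul_eq_mul]
      have hcu : ((a • u1 + b • u2 : VX) : HX) = a • (u1 : HX) + b • (u2 : HX) := by
        simp [Submodule.coe_add, Submodule.coe_smul]
      have hcv : ((a • v1 + b • v2 : VY) : HY) = a • (v1 : HY) + b • (v2 : HY) := by
        simp [Submodule.coe_add, Submodule.coe_smul]
      rw [hcu, hcv, htrace]
      rw [inner_add_left, inner_add_left, real_inner_smul_left, real_inner_smul_left,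
        real_inner_smul_left, real_inner_smul_left]
      have hp2 := hr1
      have hq2' := hr2
      nlinarith [mul_le_mul_of_nonneg_left hp2 ha, mul_le_mul_of_nonneg_left hq2' hb,
        mul_le_mul_of_nonneg_left e1 hlam2.le, mul_le_mul_of_nonneg_left e2 hlam2.le]
  have hWclosed : IsClosed W := by
    haveI : ProperSpace VX := FiniteDimensional.proper ℝ VX
    haveI : ProperSpace VY := FiniteDimensional.proper ℝ VY
    apply isClosed_of_compact_inter_ball
    intro ρ hρ
    set F : (VX × VY) × ((Fin l → Fin l → ℝ) × ℝ) → (Fin l → ℝ) × ℝ :=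
      fun q => (fun j => ⟪(q.1.1 : HX), psi j⟫_ℝ + ⟪(q.1.2 : HY), chi j⟫_ℝ
        + Phi j ⬝ᵥ (Matrix.of q.2.1) *ᵥ Phi j, q.2.2) with hFdef
    set K : Set ((VX × VY) × ((Fin l → Fin l → ℝ) × ℝ)) :=
      {q | (Matrix.of q.2.1).PosSemidef ∧ -ρ ≤ q.2.2 ∧
        q.2.2 ≤ ⟪(q.1.1 : HX), wmu⟫_ℝ + ⟪(q.1.2 : HY), wnu⟫_ℝ
          - lam1 * (Matrix.of q.2.1).trace
          - lam2 * (‖(q.1.1 : HX)‖ ^ 2 + ‖(q.1.2 : HY)‖ ^ 2)} with hKdef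
    have hcu : Continuous fun q : (VX × VY) × ((Fin l → Fin l → ℝ) × ℝ) => ((q.1.1 : HX)) :=
      continuous_subtype_val.comp (continuous_fst.comp continuous_fst)
    have hcv : Continuous fun q : (VX × VY) × ((Fin l → Fin l → ℝ) × ℝ) => ((q.1.2 : HY)) :=
      continuous_subtype_val.comp (continuous_snd.comp continuous_fst)
    have hcB : Continuous fun q : (VX × VY) × ((Fin l → Fin l → ℝ) × ℝ) => q.2.1 :=
      continuous_fst.comp continuous_snd
    have hcr : Continuous fun q : (VX × VY) × ((Fin l → Fin l → ℝ) × ℝ) => q.2.2 :=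
      continuous_snd.comp continuous_snd
    have hcBtr : Continuous fun B : Fin l → Fin l → ℝ => (Matrix.of B).trace := by
      unfold Matrix.trace Matrix.diag
      exact continuous_finset_sum _ fun i _ => (continuous_apply i).comp (continuous_apply i)
    have hcBquad : ∀ j, Continuous fun B : Fin l → Fin l → ℝ =>
        Phi j ⬝ᵥ (Matrix.of B) *ᵥ Phi j := by
      intro j
      unfold dotProduct Matrix.mulVec dotProduct
      refine continuous_finset_sum _ fun i _ => Continuous.mul continuous_const ?_
      refine continuous_finset_sum _ fun k _ => Continuous.mul ?_ continuous_const
      exact (continuous_apply k).comp (continuous_apply i)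
    have hFcont : Continuous F := by
      refine Continuous.prodMk (continuous_pi fun j => ?_) hcr
      exact ((hcu.inner continuous_const).add (hcv.inner continuous_const)).add
        ((hcBquad j).comp hcB)
    have hObjCont : Continuous fun q : (VX × VY) × ((Fin l → Fin l → ℝ) × ℝ) =>
        ⟪(q.1.1 : HX), wmu⟫_ℝ + ⟪(q.1.2 : HY), wnu⟫_ℝ - lam1 * (Matrix.of q.2.1).trace
          - lam2 * (‖(q.1.1 : HX)‖ ^ 2 + ‖(q.1.2 : HY)‖ ^ 2) := by
      refine Continuous.sub (Continuous.sub ((hcu.inner continuous_const).add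
        (hcv.inner continuous_const)) (continuous_const.mul (hcBtr.comp hcB)))
        (continuous_const.mul ((hcu.norm.pow 2).add (hcv.norm.pow 2)))
    have hKclosed : IsClosed K := by
      have : K = ((fun q : (VX × VY) × ((Fin l → Fin l → ℝ) × ℝ) => q.2.1) ⁻¹'
            {B | (Matrix.of B).PosSemidef}) ∩
          ({q | -ρ ≤ q.2.2} ∩ {q | q.2.2 ≤ ⟪(q.1.1 : HX), wmu⟫_ℝ + ⟪(q.1.2 : HY), wnu⟫_ℝ
            - lam1 * (Matrix.of q.2.1).trace
            - lam2 * (‖(q.1.1 : HX)‖ ^ 2 + ‖(q.1.2 : HY)‖ ^ 2)}) := rfl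
      rw [this]
      exact ((isClosed_psd l).preimage hcB).inter
        ((isClosed_le continuous_const hcr).inter (isClosed_le hcr hObjCont))
    -- boundedness of K
    set a : ℝ := ‖wmu‖ with hadef
    set b : ℝ := ‖wnu‖ with hbdef
    set Mx : ℝ := 1 + (2 * ρ / lam2 + (a ^ 2 + b ^ 2) / lam2 ^ 2) with hMxdef
    have hMx0 : 0 ≤ Mx := by
      have e1 : 0 ≤ 2 * ρ / lam2 := div_nonneg (by linarith) hlam2.le
      have e2 : 0 ≤ (a ^ 2 + b ^ 2) / lam2 ^ 2 := div_nonneg (by positivity) (by positivity)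
      simp only [hMxdef]; linarith
    set Ms : ℝ := (ρ + Mx * a + Mx * b) / lam1 with hMsdef
    have hMs0 : 0 ≤ Ms := by
      have ha0 : (0:ℝ) ≤ a := norm_nonneg _
      have hb0 : (0:ℝ) ≤ b := norm_nonneg _
      have e1 : 0 ≤ ρ + Mx * a + Mx * b :=
        add_nonneg (add_nonneg hρ.le (mul_nonneg hMx0 ha0)) (mul_nonneg hMx0 hb0)
      simp only [hMsdef]
      exact div_nonneg e1 hlam1.le
    set R0 : ℝ := ρ + Mx * a + Mx * b with hR0def
    have hbound : ∀ q ∈ K, ‖(q.1.1 : HX)‖ ≤ Mx ∧ ‖(q.1.2 : HY)‖ ≤ Mx ∧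
        (Matrix.of q.2.1).trace ≤ Ms ∧ |q.2.2| ≤ R0 := by
      rintro q ⟨hpsd, hrlo, hrhi⟩
      set x : ℝ := ‖(q.1.1 : HX)‖ with hxdef
      set y : ℝ := ‖(q.1.2 : HY)‖ with hydef
      have hx0 : 0 ≤ x := norm_nonneg _
      have hy0 : 0 ≤ y := norm_nonneg _
      have htr0 : 0 ≤ (Matrix.of q.2.1).trace := psd_trace_nonneg hpsd
      have hiu : ⟪(q.1.1 : HX), wmu⟫_ℝ ≤ x * a := real_inner_le_norm _ _
      have hiv : ⟪(q.1.2 : HY), wnu⟫_ℝ ≤ y * b := real_inner_le_norm _ _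
      have hmain : lam2 * (x ^ 2 + y ^ 2) + lam1 * (Matrix.of q.2.1).trace ≤ ρ + x * a + y * b := by
        nlinarith [hrlo, hrhi, hiu, hiv]
      have key2 : lam2 ^ 2 * x ^ 2 + lam2 ^ 2 * y ^ 2 ≤ 2 * ρ * lam2 + (a ^ 2 + b ^ 2) := by
        have h1 : lam2 * x * a ≤ (lam2 ^ 2 * x ^ 2 + a ^ 2) / 2 := by
          nlinarith [sq_nonneg (lam2 * x - a)]
        have h2 : lam2 * y * b ≤ (lam2 ^ 2 * y ^ 2 + b ^ 2) / 2 := by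
          nlinarith [sq_nonneg (lam2 * y - b)]
        have h3 : lam2 * (lam2 * (x ^ 2 + y ^ 2)) ≤ lam2 * (ρ + x * a + y * b) := by
          nlinarith [hmain, mul_nonneg hlam1.le htr0]
        nlinarith [h1, h2, h3]
      have hx2 : x ^ 2 ≤ 2 * ρ / lam2 + (a ^ 2 + b ^ 2) / lam2 ^ 2 := by
        rw [div_add_div _ _ (ne_of_gt hlam2) (by positivity), le_div_iff₀ (by positivity)]
        nlinarith [mul_le_mul_of_nonneg_left key2 hlam2.le,
          mul_nonneg (mul_nonneg hlam2.le (mul_nonneg hlam2.le hlam2.le)) (sq_nonneg y)]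
      have hy2 : y ^ 2 ≤ 2 * ρ / lam2 + (a ^ 2 + b ^ 2) / lam2 ^ 2 := by
        rw [div_add_div _ _ (ne_of_gt hlam2) (by positivity), le_div_iff₀ (by positivity)]
        nlinarith [mul_le_mul_of_nonneg_left key2 hlam2.le,
          mul_nonneg (mul_nonneg hlam2.le (mul_nonneg hlam2.le hlam2.le)) (sq_nonneg x)]
      have hxMx : x ≤ Mx := by
        have : x ≤ 1 + x ^ 2 := by nlinarith [sq_nonneg (x - 1)]
        simp only [hMxdef]; linarith
      have hyMx : y ≤ Mx := by
        have : y ≤ 1 + y ^ 2 := by nlinarith [sq_nonneg (y - 1)]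
        simp only [hMxdef]; linarith
      have ha0 : (0:ℝ) ≤ a := norm_nonneg _
      have hb0 : (0:ℝ) ≤ b := norm_nonneg _
      have htrMs : (Matrix.of q.2.1).trace ≤ Ms := by
        rw [hMsdef, le_div_iff₀ hlam1]
        nlinarith [hmain, mul_nonneg hlam2.le (add_nonneg (sq_nonneg x) (sq_nonneg y)),
          mul_le_mul_of_nonneg_right hxMx ha0, mul_le_mul_of_nonneg_right hyMx hb0]
      refine ⟨hxMx, hyMx, htrMs, abs_le.mpr ⟨?_, ?_⟩⟩
      · have e5 : 0 ≤ Mx * a + Mx * b := add_nonneg (mul_nonneg hMx0 ha0) (mul_nonneg hMx0 hb0)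
        simp only [hR0def]; linarith
      · have : q.2.2 ≤ x * a + y * b := by
          nlinarith [hrhi, hiu, hiv, mul_nonneg hlam1.le htr0, mul_nonneg hlam2.le (add_nonneg (sq_nonneg x) (sq_nonneg y))]
        have h2 : x * a ≤ Mx * a := mul_le_mul_of_nonneg_right hxMx ha0
        have h3 : y * b ≤ Mx * b := mul_le_mul_of_nonneg_right hyMx hb0
        simp only [hR0def]; linarith
    set R : ℝ := Mx + Ms + R0 with hRdef
    have hR0' : 0 ≤ R0 := by
      have ha0 : (0:ℝ) ≤ a := norm_nonneg _
      have hb0 : (0:ℝ) ≤ b := norm_nonneg _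
      have e5 : 0 ≤ Mx * a + Mx * b := add_nonneg (mul_nonneg hMx0 ha0) (mul_nonneg hMx0 hb0)
      simp only [hR0def]; linarith
    have hKsub : K ⊆ Metric.closedBall 0 R := by
      intro q hq
      obtain ⟨hx, hy, htr, hr⟩ := hbound q hq
      have hpsd := hq.1
      rw [Metric.mem_closedBall, dist_zero_right]
      rw [Prod.norm_def, Prod.norm_def, Prod.norm_def]
      have hnu : ‖q.1.1‖ ≤ Mx := by
        rw [show ‖q.1.1‖ = ‖(q.1.1 : HX)‖ from rfl]; exact hx
      have hnv : ‖q.1.2‖ ≤ Mx := by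
        rw [show ‖q.1.2‖ = ‖(q.1.2 : HY)‖ from rfl]; exact hy
      have hnB : ‖q.2.1‖ ≤ Ms := by
        rw [pi_norm_le_iff_of_nonneg hMs0]
        intro i
        rw [pi_norm_le_iff_of_nonneg hMs0]
        intro j
        rw [Real.norm_eq_abs]
        exact le_trans (psd_entry_le_trace hpsd i j) htr
      have hnr : ‖q.2.2‖ ≤ R0 := by rw [Real.norm_eq_abs]; exact hr
      have hRb : Mx ≤ R := by simp only [hRdef]; linarith
      have hRb2 : Ms ≤ R := by simp only [hRdef]; linarith
      have hRb3 : R0 ≤ R := by simp only [hRdef]; linarith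
      exact max_le (max_le (le_trans hnu hRb) (le_trans hnv hRb))
        (max_le (le_trans hnB hRb2) (le_trans hnr hRb3))
    have hKcpt : IsCompact K :=
      Metric.isCompact_of_isClosed_isBounded hKclosed
        (Metric.isBounded_closedBall.subset hKsub)
    have heq : W ∩ Metric.closedBall 0 ρ = (F '' K) ∩ Metric.closedBall 0 ρ := by
      ext p
      constructor
      · rintro ⟨⟨u, v, B, hB, hcs, hrle⟩, hball⟩
        refine ⟨⟨((u, v), (B, p.2)), ⟨hB, ?_, hrle⟩, ?_⟩, hball⟩
        · have : ‖p.2‖ ≤ ‖p‖ := norm_snd_le p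
          rw [Metric.mem_closedBall, dist_zero_right] at hball
          rw [Real.norm_eq_abs] at this
          have := abs_le.mp (le_trans this hball)
          linarith [this.1]
        · refine Prod.ext ?_ rfl
          funext j
          exact (hcs j).symm
      · rintro ⟨⟨q, ⟨hpsd, _, hrle⟩, rfl⟩, hball⟩
        exact ⟨⟨q.1.1, q.1.2, q.2.1, hpsd, fun j => rfl, hrle⟩, hball⟩
    rw [heq]
    exact (hKcpt.image hFcont).inter_right Metric.isClosed_closedBall
  obtain ⟨f, u₀, hfW, hfct⟩ := geometric_hahn_banach_closed_point hWconv hWclosed hnotin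
  have hfdec : ∀ (w : Fin l → ℝ) (r : ℝ),
      f (w, r) = (∑ j, w j * f (Pi.single j 1, 0)) + r * f (0, 1) := by
    intro w r
    have hsingle : ∀ j, w j • (Pi.single j (1:ℝ) : Fin l → ℝ) = Pi.single j (w j) := by
      intro j
      funext k
      rcases eq_or_ne k j with rfl | h
      · simp
      · simp [Pi.single_apply, h]
    have hw : ((w, r) : (Fin l → ℝ) × ℝ)
        = (∑ j, w j • ((Pi.single j (1:ℝ) : Fin l → ℝ), (0:ℝ))) + r • ((0 : Fin l → ℝ), (1:ℝ)) := by
      refine Prod.ext ?_ ?_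
      · have h1 : ((∑ j, w j • ((Pi.single j (1:ℝ) : Fin l → ℝ), (0:ℝ)))
            + r • ((0 : Fin l → ℝ), (1:ℝ))).1
            = ∑ j, w j • (Pi.single j (1:ℝ) : Fin l → ℝ) := by
          simp [Prod.fst_sum]
        rw [h1]
        simp_rw [hsingle]
        exact (Finset.univ_sum_single w).symm
      · simp [Prod.snd_sum]
    rw [hw, map_add, map_sum, _root_.map_smul, smul_eq_mul]
    congr 1
    refine Finset.sum_congr rfl fun j _ => ?_
    rw [_root_.map_smul, smul_eq_mul]
  set gam : Fin l → ℝ := fun j => f (Pi.single j 1, 0) with hgamdef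
  set tau : ℝ := f ((0 : Fin l → ℝ), (1:ℝ)) with htaudef
  have hsepW : ∀ p ∈ W, (∑ j, p.1 j * gam j) + p.2 * tau < u₀ := by
    rintro ⟨w, r⟩ hp
    have := hfW _ hp
    rwa [hfdec w r] at this
  have hct : u₀ < (∑ j, c j * gam j) + t * tau := by
    rw [hfdec c t] at hfct
    exact hfct
  have hof0 : Matrix.of (0 : Fin l → Fin l → ℝ) = (0 : Matrix (Fin l) (Fin l) ℝ) := rfl
  have hpsd0 : (Matrix.of (0 : Fin l → Fin l → ℝ)).PosSemidef := by
    rw [hof0]; exact Matrix.PosSemidef.zero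
  have hmk : ∀ (u : VX) (v : VY) (B : Fin l → Fin l → ℝ), (Matrix.of B).PosSemidef →
      (((fun j => ⟪(u:HX), psi j⟫_ℝ + ⟪(v:HY), chi j⟫_ℝ + Phi j ⬝ᵥ (Matrix.of B) *ᵥ Phi j),
        ⟪(u:HX), wmu⟫_ℝ + ⟪(v:HY), wnu⟫_ℝ - lam1 * (Matrix.of B).trace
          - lam2 * (‖(u:HX)‖ ^ 2 + ‖(v:HY)‖ ^ 2)) : (Fin l → ℝ) × ℝ) ∈ W :=
    fun u v B hB => ⟨u, v, B, hB, fun j => rfl, le_rfl⟩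
  have hsep2 : ∀ (u : VX) (v : VY) (B : Fin l → Fin l → ℝ), (Matrix.of B).PosSemidef →
      (∑ j, (⟪(u:HX), psi j⟫_ℝ + ⟪(v:HY), chi j⟫_ℝ + Phi j ⬝ᵥ (Matrix.of B) *ᵥ Phi j) * gam j)
      + (⟪(u:HX), wmu⟫_ℝ + ⟪(v:HY), wnu⟫_ℝ - lam1 * (Matrix.of B).trace
          - lam2 * (‖(u:HX)‖ ^ 2 + ‖(v:HY)‖ ^ 2)) * tau < u₀ :=
    fun u v B hB => hsepW _ (hmk u v B hB)
  have hu₀pos : 0 < u₀ := by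
    have h2 := hsep2 0 0 0 hpsd0
    simp only [ZeroMemClass.coe_zero, inner_zero_left, hof0, Matrix.zero_mulVec,
      dotProduct_zero, Matrix.trace_zero, norm_zero] at h2
    simpa using h2
  have htau0 : 0 ≤ tau := by
    by_contra hneg
    push_neg at hneg
    have hWz : (((fun _ => (0:ℝ)) : Fin l → ℝ), (u₀ + 1) / tau) ∈ W := by
      refine ⟨0, 0, 0, hpsd0, fun j => ?_, ?_⟩
      · simp [hof0]
      · simp only [ZeroMemClass.coe_zero, inner_zero_left, hof0, Matrix.trace_zero, norm_zero]
        have : (u₀ + 1) / tau ≤ 0 :=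
          div_nonpos_of_nonneg_of_nonpos (by linarith) hneg.le
        simpa using this
    have h2 := hsepW _ hWz
    simp only [zero_mul, Finset.sum_const_zero, zero_add] at h2
    rw [div_mul_cancel₀ _ (ne_of_lt hneg)] at h2
    linarith
  have hkey : ∀ x : Fin l → ℝ,
      (∑ j, ((Phi j ⬝ᵥ x) * (Phi j ⬝ᵥ x)) * gam j) - lam1 * (x ⬝ᵥ x) * tau ≤ 0 := by
    intro x
    apply nonpos_of_forall_smul_lt (K := u₀)
    intro s hs
    have hofB : Matrix.of (fun i k => s * (x i * x k)) = s • vecMulVec x x := by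
      ext i k; simp [vecMulVec_apply]
    have hpsdB : (Matrix.of (fun i k => s * (x i * x k))).PosSemidef := by
      rw [hofB]; exact psd_smul_nonneg hs.le (vecMulVec_psd x)
    have h2 := hsep2 0 0 (fun i k => s * (x i * x k)) hpsdB
    have etr : (Matrix.of (fun i k => s * (x i * x k))).trace = s * (x ⬝ᵥ x) := by
      rw [hofB, trace_smul, smul_eq_mul]
      rfl
    have equad : ∀ j, Phi j ⬝ᵥ (Matrix.of (fun i k => s * (x i * x k))) *ᵥ Phi j
        = s * ((Phi j ⬝ᵥ x) * (Phi j ⬝ᵥ x)) := by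
      intro j
      rw [hofB, smul_mulVec, dotProduct_smul, dot_vecMulVec, smul_eq_mul,
        dotProduct_comm x (Phi j)]
    simp only [ZeroMemClass.coe_zero, inner_zero_left, zero_add, norm_zero, etr, equad] at h2
    have e2 : ∑ j, (s * ((Phi j ⬝ᵥ x) * (Phi j ⬝ᵥ x))) * gam j
        = s * ∑ j, ((Phi j ⬝ᵥ x) * (Phi j ⬝ᵥ x)) * gam j := by
      rw [Finset.mul_sum]
      exact Finset.sum_congr rfl fun j _ => by ring
    rw [mul_sub]
    rw [e2] at h2
    nlinarith [h2]
  rcases eq_or_lt_of_le htau0 with htauz | htaupos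
  · -- tau = 0 : contradiction
    have hSvanish : ∀ (w : HX) (hw : w ∈ VX), (∀ s : ℝ, 0 < s →
        s * ⟪w, ∑ j, gam j • psi j⟫_ℝ < u₀) := by
      intro w hw s hs
      have h2 := hsep2 (s • ⟨w, hw⟩) 0 0 hpsd0
      simp only [ZeroMemClass.coe_zero, inner_zero_left, hof0, Matrix.zero_mulVec,
        dotProduct_zero, Matrix.trace_zero, norm_zero, ← htauz, mul_zero, add_zero,
        Submodule.coe_smul] at h2
      have e3 : ∑ j, ⟪s • w, psi j⟫_ℝ * gam j
          = s * ⟪w, ∑ j, gam j • psi j⟫_ℝ := by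
        rw [inner_sum_smul', Finset.mul_sum]
        refine Finset.sum_congr rfl fun j _ => ?_
        rw [real_inner_smul_left]
        ring
      rw [e3] at h2
      linarith
    have hSpsi : (∑ j, gam j • psi j) = 0 := by
      have hmem : (∑ j, gam j • psi j) ∈ VX :=
        Submodule.sum_mem _ fun j _ => Submodule.smul_mem _ _ (hpsiX j)
      have := nonpos_of_forall_smul_lt (hSvanish _ hmem)
      exact real_inner_self_nonpos.mp this
    have hSvanishY : ∀ (w : HY) (hw : w ∈ VY), (∀ s : ℝ, 0 < s →
        s * ⟪w, ∑ j, gam j • chi j⟫_ℝ < u₀) := by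
      intro w hw s hs
      have h2 := hsep2 0 (s • ⟨w, hw⟩) 0 hpsd0
      simp only [ZeroMemClass.coe_zero, inner_zero_left, hof0, Matrix.zero_mulVec,
        dotProduct_zero, Matrix.trace_zero, norm_zero, ← htauz, mul_zero, add_zero,
        zero_add, Submodule.coe_smul] at h2
      have e3 : ∑ j, ⟪s • w, chi j⟫_ℝ * gam j
          = s * ⟪w, ∑ j, gam j • chi j⟫_ℝ := by
        rw [inner_sum_smul', Finset.mul_sum]
        refine Finset.sum_congr rfl fun j _ => ?_
        rw [real_inner_smul_left]
        ring
      rw [e3] at h2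
      linarith
    have hSchi : (∑ j, gam j • chi j) = 0 := by
      have hmem : (∑ j, gam j • chi j) ∈ VY :=
        Submodule.sum_mem _ fun j _ => Submodule.smul_mem _ _ (hchiY j)
      have := nonpos_of_forall_smul_lt (hSvanishY _ hmem)
      exact real_inner_self_nonpos.mp this
    have hcj : ∀ j, c j = ⟪u0, psi j⟫_ℝ + ⟪v0, chi j⟫_ℝ + Phi j ⬝ᵥ B0 *ᵥ Phi j := by
      intro j
      have := hfeas0 j
      linarith
    have hNneg : ((- ∑ j, gam j • vecMulVec (Phi j) (Phi j)) : Matrix (Fin l) (Fin l) ℝ).PosSemidef := by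
      refine real_psd_of (herm_sum_vv gam Phi).neg fun x => ?_
      rw [Matrix.neg_mulVec, dotProduct_neg]
      have hq := quad_eval0 gam Phi x
      have hk := hkey x
      rw [← htauz, mul_zero, sub_zero] at hk
      have : ∑ j, gam j * ((Phi j ⬝ᵥ x) * (Phi j ⬝ᵥ x))
          = ∑ j, ((Phi j ⬝ᵥ x) * (Phi j ⬝ᵥ x)) * gam j :=
        Finset.sum_congr rfl fun j _ => by ring
      rw [hq, this]
      linarith
    have hcsum : (∑ j, c j * gam j) ≤ 0 := by
      have e4 : ∑ j, c j * gam j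
          = ⟪u0, ∑ j, gam j • psi j⟫_ℝ + ⟪v0, ∑ j, gam j • chi j⟫_ℝ
            + ∑ j, gam j * (Phi j ⬝ᵥ B0 *ᵥ Phi j) := by
        rw [inner_sum_smul', inner_sum_smul', ← Finset.sum_add_distrib, ← Finset.sum_add_distrib]
        refine Finset.sum_congr rfl fun j _ => ?_
        rw [hcj j]
        ring
      have e5 : ∑ j, gam j * (Phi j ⬝ᵥ B0 *ᵥ Phi j)
          = (B0 * ∑ j, gam j • vecMulVec (Phi j) (Phi j)).trace :=
        (trace_mul_sum_vv B0 gam Phi).symm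
      have e6 : 0 ≤ (B0 * (- ∑ j, gam j • vecMulVec (Phi j) (Phi j))).trace :=
        trace_mul_psd_nonneg hB0 hNneg
      rw [Matrix.mul_neg, Matrix.trace_neg] at e6
      rw [e4, hSpsi, hSchi, inner_zero_right, inner_zero_right, e5]
      linarith
    rw [← htauz, mul_zero, add_zero] at hct
    linarith
  · -- tau > 0
    set β : Fin l → ℝ := fun j => -(gam j) / tau with hβdef
    have hgb : ∀ j, gam j = -(tau * β j) := by
      intro j
      simp only [hβdef]
      field_simp
    have hMβ : (∑ j, β j • vecMulVec (Phi j) (Phi j)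
        + lam1 • (1 : Matrix (Fin l) (Fin l) ℝ)).PosSemidef := by
      refine real_psd_of (Mgamma_herm β Phi lam1) fun x => ?_
      rw [quad_eval]
      have hk := hkey x
      have e7 : ∑ j, β j * ((Phi j ⬝ᵥ x) * (Phi j ⬝ᵥ x))
          = -(1 / tau) * ∑ j, ((Phi j ⬝ᵥ x) * (Phi j ⬝ᵥ x)) * gam j := by
        rw [Finset.mul_sum]
        refine Finset.sum_congr rfl fun j _ => ?_
        simp only [hβdef]
        ring
      rw [e7]
      have hxx : 0 ≤ x ⬝ᵥ x := Finset.sum_nonneg fun i _ => mul_self_nonneg _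
      have h8 : (1 / tau) * ((∑ j, ((Phi j ⬝ᵥ x) * (Phi j ⬝ᵥ x)) * gam j))
          ≤ (1 / tau) * (lam1 * (x ⬝ᵥ x) * tau) := by
        apply mul_le_mul_of_nonneg_left _ (by positivity)
        linarith
      have h9 : (1 / tau) * (lam1 * (x ⬝ᵥ x) * tau) = lam1 * (x ⬝ᵥ x) := by
        field_simp
      linarith [h8, h9.symm.le]
    set ustar : HX := (1 / (2 * lam2)) • (wmu - ∑ j, β j • psi j) with hustardef
    set vstar : HY := (1 / (2 * lam2)) • (wnu - ∑ j, β j • chi j) with hvstardef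
    have hustarX : ustar ∈ VX :=
      Submodule.smul_mem _ _ (Submodule.sub_mem _ hwmuX
        (Submodule.sum_mem _ fun j _ => Submodule.smul_mem _ _ (hpsiX j)))
    have hvstarY : vstar ∈ VY :=
      Submodule.smul_mem _ _ (Submodule.sub_mem _ hwnuY
        (Submodule.sum_mem _ fun j _ => Submodule.smul_mem _ _ (hchiY j)))
    have h2 := hsep2 ⟨ustar, hustarX⟩ ⟨vstar, hvstarY⟩ 0 hpsd0
    simp only [hof0, Matrix.zero_mulVec, dotProduct_zero, Matrix.trace_zero, mul_zero,
      add_zero] at h2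
    -- h2 : ∑ j, (⟪ustar, psi j⟫ + ⟪vstar, chi j⟫ + 0) * gam j
    --      + (⟪ustar,wmu⟫ + ⟪vstar,wnu⟫ - lam1*0 - lam2*(‖ustar‖²+‖vstar‖²)) * tau < u₀
    have eA : ∑ j, (⟪ustar, psi j⟫_ℝ + ⟪vstar, chi j⟫_ℝ) * gam j
        = -(tau * ∑ j, β j * (⟪ustar, psi j⟫_ℝ + ⟪vstar, chi j⟫_ℝ)) := by
      rw [Finset.mul_sum, ← Finset.sum_neg_distrib]
      refine Finset.sum_congr rfl fun j _ => ?_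
      rw [hgb j]
      ring
    have eB : ∑ j, c j * gam j = -(tau * ∑ j, β j * c j) := by
      rw [Finset.mul_sum, ← Finset.sum_neg_distrib]
      refine Finset.sum_congr rfl fun j _ => ?_
      rw [hgb j]
      ring
    have eC : ∑ j, β j * (c j - ⟪ustar, psi j⟫_ℝ - ⟪vstar, chi j⟫_ℝ)
        = ∑ j, β j * c j - ∑ j, β j * (⟪ustar, psi j⟫_ℝ + ⟪vstar, chi j⟫_ℝ) := by
      rw [← Finset.sum_sub_distrib]
      refine Finset.sum_congr rfl fun j _ => by ring
    -- combine h2 and hct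
    have hmain2 : (⟪ustar, wmu⟫_ℝ + ⟪vstar, wnu⟫_ℝ - lam2 * (‖ustar‖ ^ 2 + ‖vstar‖ ^ 2))
        + ∑ j, β j * (c j - ⟪ustar, psi j⟫_ℝ - ⟪vstar, chi j⟫_ℝ) < t := by
      rw [eA] at h2
      rw [eB] at hct
      rw [eC]
      have hcomb : tau * ((⟪ustar, wmu⟫_ℝ + ⟪vstar, wnu⟫_ℝ
          - lam2 * (‖ustar‖ ^ 2 + ‖vstar‖ ^ 2))
          + (∑ j, β j * c j - ∑ j, β j * (⟪ustar, psi j⟫_ℝ + ⟪vstar, chi j⟫_ℝ))) < tau * t := by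
        nlinarith [h2, hct]
      exact lt_of_mul_lt_mul_left (by linarith [hcomb]) htaupos.le
    have key := key_identity l lam2 hlam2 wmu psi wnu chi c Q hQ z hz q2 hq2 β ustar vstar
    have hz1 : ustar - (1 / (2 * lam2)) • (wmu - ∑ j, β j • psi j) = 0 := by
      rw [hustardef]; exact sub_self _
    have hz2 : vstar - (1 / (2 * lam2)) • (wnu - ∑ j, β j • chi j) = 0 := by
      rw [hvstardef]; exact sub_self _
    rw [hz1, hz2] at key
    simp only [norm_zero, ne_eq, OfNat.ofNat_ne_zero, not_false_eq_true, zero_pow, mul_zero,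
      sub_zero] at key
    have hgmem : ((1 / (4 * lam2)) * (β ⬝ᵥ Q *ᵥ β) - (1 / (2 * lam2)) * ∑ j, β j * z j
        + q2 / (4 * lam2)) ∈ Dset := ⟨β, hMβ, rfl⟩
    have hinf := csInf_le hbddD hgmem
    linarith [hmain2, key, hinf, htD]
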